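/- Let G be a graph, S a Grundy dominating sequence of G, and A ⊆ V(G) a set of open twins with A ∩ Ŝ ≠ ∅, where Ŝ is the set of vertices appearing in S. If the first vertex of A appearing in S footprints itself (i.e., is not in the union of closed neighborhoods of earlier vertices of S), then there exists a Grundy dominating sequence of G containing all vertices of A, with all vertices of A appearing consecutively. -/

import Mathlib

open Finset

variable {V : Type*}

/-- The closed neighborhood of a vertex. -/
def CN (G : SimpleGraph V) (v : V) : Set V := insert v (G.neighborSet v)

/-- A closed neighborhood (legal) sequence: distinct vertices, each footprinting
a vertex not dominated by the closed neighborhoods of earlier vertices. -/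
def IsCNSeq (G : SimpleGraph V) (S : List V) : Prop :=
  S.Nodup ∧ ∀ i : Fin S.length, ∃ u, u ∈ CN G (S.get i) ∧
    ∀ j : Fin S.length, j < i → u ∉ CN G (S.get j)

/-- A dominating sequence: a closed neighborhood sequence whose vertex set dominates. -/
def IsDomSeq (G : SimpleGraph V) (S : List V) : Prop :=
  IsCNSeq G S ∧ ∀ v : V, ∃ u ∈ S, v ∈ CN G u

/-- The Grundy domination number: the maximum length of a dominating sequence. -/
noncomputable def grundyDom (G : SimpleGraph V) : ℕ :=
  sSup {n | ∃ S : List V, IsDomSeq G S ∧ S.length = n}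

lemma mem_CN_iff {G : SimpleGraph V} {v u : V} : u ∈ CN G v ↔ u = v ∨ G.Adj v u := by
  simp [CN]

lemma mem_CN_self (G : SimpleGraph V) (v : V) : v ∈ CN G v := Set.mem_insert _ _

lemma mem_take_iff' {α : Type*} {l : List α} {k : ℕ} {t : α} :
    t ∈ l.take k ↔ ∃ (j : ℕ) (h : j < l.length), j < k ∧ l[j] = t := by
  rw [List.mem_take_iff_getElem]
  constructor
  · rintro ⟨j, hj, e⟩
    exact ⟨j, (lt_min_iff.1 hj).2, (lt_min_iff.1 hj).1, e⟩
  · rintro ⟨j, h1, h2, e⟩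
    exact ⟨j, lt_min_iff.2 ⟨h2, h1⟩, e⟩

lemma isCNSeq_iff' (G : SimpleGraph V) (S : List V) :
    IsCNSeq G S ↔ S.Nodup ∧ ∀ k (hk : k < S.length),
      ∃ u, u ∈ CN G (S[k]'hk) ∧ ∀ t ∈ S.take k, u ∉ CN G t := by
  constructor
  · rintro ⟨hnd, h⟩
    refine ⟨hnd, fun k hk => ?_⟩
    obtain ⟨u, hu1, hu2⟩ := h ⟨k, hk⟩
    refine ⟨u, hu1, fun t ht => ?_⟩
    rw [mem_take_iff'] at ht
    obtain ⟨j, h1, h2, rfl⟩ := ht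
    exact hu2 ⟨j, h1⟩ h2
  · rintro ⟨hnd, h⟩
    refine ⟨hnd, fun k => ?_⟩
    obtain ⟨u, hu1, hu2⟩ := h k.1 k.2
    refine ⟨u, hu1, fun j hj => ?_⟩
    exact hu2 _ (mem_take_iff'.2 ⟨j.1, j.2, hj, rfl⟩)

lemma getElem_append3_left {α : Type*} (P L T : List α) {k : ℕ} (h1 : k < P.length)
    (hk : k < (P ++ (L ++ T)).length) : (P ++ (L ++ T))[k] = P[k] :=
  List.getElem_append_left h1

lemma getElem_append3_mid {α : Type*} (P L T : List α) {k : ℕ} (h1 : P.length ≤ k)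
    (h2 : k - P.length < L.length) (hk : k < (P ++ (L ++ T)).length) :
    (P ++ (L ++ T))[k] = L[k - P.length] := by
  rw [List.getElem_append_right h1, List.getElem_append_left h2]

lemma getElem_append3_right {α : Type*} (P L T : List α) {k : ℕ}
    (h1 : P.length + L.length ≤ k) (hk : k < (P ++ (L ++ T)).length)
    (h2 : k - P.length - L.length < T.length) :
    (P ++ (L ++ T))[k] = T[k - P.length - L.length] := by
  rw [List.getElem_append_right (le_trans (Nat.le_add_right _ _) h1),
    List.getElem_append_right (by omega : L.length ≤ k - P.length)]

theorem exists_grundy_seq_all_twins {V : Type*} [Fintype V] [DecidableEq V]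
    (G : SimpleGraph V) (S : List V) (hS : IsDomSeq G S) (hlen : S.length = grundyDom G)
    (A : Set V) (hA : ∀ u ∈ A, ∀ v ∈ A, G.neighborSet u = G.neighborSet v)
    (i : Fin S.length) (hiA : S.get i ∈ A)
    (hfirst : ∀ j : Fin S.length, j < i → S.get j ∉ A)
    (hfoot : ∀ j : Fin S.length, j < i → S.get i ∉ CN G (S.get j)) :
    ∃ S' : List V, IsDomSeq G S' ∧ S'.length = grundyDom G ∧ (∀ a ∈ A, a ∈ S') ∧
      ∀ p q r : Fin S'.length, p ≤ q → q ≤ r →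
        S'.get p ∈ A → S'.get r ∈ A → S'.get q ∈ A := by
  classical
  obtain ⟨hCN, hdom⟩ := hS
  rw [isCNSeq_iff'] at hCN
  obtain ⟨hnd, hleg⟩ := hCN
  obtain ⟨ii, hiS⟩ := i
  set x : V := S[ii]'hiS with hxdef
  have hxA : x ∈ A := hiA
  -- twin facts
  have hNx : ∀ a ∈ A, G.neighborSet a = G.neighborSet x := fun a ha => hA a ha x hxA
  have hCNA : ∀ a ∈ A, ∀ u, u ∈ CN G a ↔ (u = a ∨ G.Adj x u) := by
    intro a ha u
    rw [mem_CN_iff]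
    have : G.Adj a u ↔ G.Adj x u := by
      rw [← SimpleGraph.mem_neighborSet, ← SimpleGraph.mem_neighborSet, hNx a ha]
    tauto
  have hAA : ∀ a ∈ A, ∀ t ∈ A, a ≠ t → a ∉ CN G t := by
    intro a ha t ht hne hmem
    rcases (hCNA t ht a).1 hmem with h | h
    · exact hne h
    · have h2 : x ∈ G.neighborSet a := h.symm
      rw [hNx a ha] at h2
      exact G.irrefl h2
  have hfirst' : ∀ j (hj : j < ii), (S[j]'(lt_trans hj hiS)) ∉ A := fun j hj =>
    hfirst ⟨j, lt_trans hj hiS⟩ hj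
  have hfoot' : ∀ j (hj : j < ii), x ∉ CN G (S[j]'(lt_trans hj hiS)) := fun j hj =>
    hfoot ⟨j, lt_trans hj hiS⟩ hj
  have hApre : ∀ a ∈ A, ∀ j (hj : j < ii), a ∉ CN G (S[j]'(lt_trans hj hiS)) := by
    intro a ha j hj hmem
    rcases mem_CN_iff.1 hmem with h | h
    · exact hfirst' j hj (h ▸ ha)
    · have h2 : S[j]'(lt_trans hj hiS) ∈ G.neighborSet a := h.symm
      rw [hNx a ha] at h2
      exact hfoot' j hj (mem_CN_iff.2 (Or.inr h2.symm))
  set P := S.take ii with hP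
  set D := S.drop (ii + 1) with hD
  have hPlen : P.length = ii := by
    rw [hP, List.length_take]; omega
  have hDlen : ii + 1 + D.length = S.length := by
    rw [hD, List.length_drop]; omega
  have hDget : ∀ m (hm : m < D.length), D[m]'hm = S[ii + 1 + m]'(by omega) := by
    intro m hm
    exact List.getElem_drop
  have hSplit : S = P ++ x :: D := by
    conv_lhs => rw [← List.take_append_drop ii S, List.drop_eq_getElem_cons hiS]
  have hnd2 := hnd
  rw [hSplit, List.nodup_append] at hnd2
  obtain ⟨hndP, hndxD, hdisPxD⟩ := hnd2
  have hndD : D.Nodup := (List.nodup_cons.1 hndxD).2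
  have hxD : x ∉ D := (List.nodup_cons.1 hndxD).1
  have hxS : x ∈ S := List.getElem_mem hiS
  have hidx : ∀ m (hm : m < D.length), S.idxOf (D[m]'hm) = ii + 1 + m := by
    intro m hm
    rw [hDget m hm]
    exact List.Nodup.idxOf_getElem hnd _ _
  -- the block of twins
  set Atf := (Set.toFinite A).toFinset with hAtf
  have hmemAtf : ∀ a, a ∈ Atf ↔ a ∈ A := fun a => Set.Finite.mem_toFinset _
  set L := Atf.toList with hL
  have hndL : L.Nodup := Finset.nodup_toList _
  have hmemL : ∀ a, a ∈ L ↔ a ∈ A := fun a => by rw [hL, Finset.mem_toList, hmemAtf]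
  have hLlen : L.length = Atf.card := Finset.length_toList _
  -- goodness
  set good : V → Prop := fun s => ∃ u, u ∈ CN G s ∧ u ∉ A ∧
    ∀ t ∈ S.take (S.idxOf s), u ∉ CN G t with hgood
  set D' := D.filter (fun s => !decide (s ∈ A)) with hD'
  set T := D'.filter (fun s => decide (good s)) with hT
  set Bad := D'.filter (fun s => !decide (good s)) with hBad
  have hmemT : ∀ s, s ∈ T ↔ s ∈ D ∧ s ∉ A ∧ good s := by
    intro s; simp [hT, hD', List.mem_filter]; tauto
  have hmemBad : ∀ s, s ∈ Bad ↔ s ∈ D ∧ s ∉ A ∧ ¬ good s := by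
    intro s; simp [hBad, hD', List.mem_filter]; tauto
  have hcount : D.length = (D.filter (fun s => decide (s ∈ A))).length + (T.length + Bad.length) := by
    rw [List.length_eq_length_filter_add (fun s => decide (s ∈ A))]
    congr 1
    exact List.length_eq_length_filter_add _
  -- key: footprints of bad vertices are new twins
  have hbadex : ∀ m (hm : m < D.length), (D[m]'hm) ∉ A → ¬ good (D[m]'hm) →
      ∃ u, u ∈ A ∧ u ∉ S ∧ u ∈ CN G (D[m]'hm) ∧
        ∀ t ∈ S.take (S.idxOf (D[m]'hm)), u ∉ CN G t := by
    intro m hm hnA hng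
    obtain ⟨u, hu1, hu2⟩ := hleg (ii + 1 + m) (by omega)
    rw [← hDget m hm] at hu1
    have huA : u ∈ A := by
      by_contra h
      exact hng ⟨u, hu1, h, by rw [hidx m hm]; exact hu2⟩
    rw [hidx m hm]
    refine ⟨u, huA, ?_, hu1, hu2⟩
    intro huS
    obtain ⟨mu, hmu, hmue⟩ := List.getElem_of_mem huS
    rcases lt_trichotomy mu (ii + 1 + m) with h | h | h
    · exact hu2 u (mem_take_iff'.2 ⟨mu, hmu, h, hmue⟩) (mem_CN_self G u)
    · subst h
      have : D[m]'hm = u := (hDget m hm).trans hmue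
      exact hnA (this ▸ huA)
    · obtain ⟨w, hw1, hw2⟩ := hleg mu hmu
      rw [hmue] at hw1
      rcases (hCNA u huA w).1 hw1 with hwu | hwx
      · subst hwu
        exact hw2 (D[m]'hm)
          (mem_take_iff'.2 ⟨ii + 1 + m, by omega, h, (hDget m hm).symm⟩) hu1
      · exact hw2 x (mem_take_iff'.2 ⟨ii, hiS, by omega, rfl⟩)
          (mem_CN_iff.2 (Or.inr hwx))
  -- choice function
  set F : V → V := fun s => if h : ∃ u, u ∈ A ∧ u ∉ S ∧ u ∈ CN G s ∧
      ∀ t ∈ S.take (S.idxOf s), u ∉ CN G t then h.choose else s with hF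
  have hFspec : ∀ m (hm : m < D.length), (D[m]'hm) ∉ A → ¬ good (D[m]'hm) →
      F (D[m]'hm) ∈ A ∧ F (D[m]'hm) ∉ S ∧ F (D[m]'hm) ∈ CN G (D[m]'hm) ∧
        ∀ t ∈ S.take (ii + 1 + m), F (D[m]'hm) ∉ CN G t := by
    intro m hm h1 h2
    have hex := hbadex m hm h1 h2
    have hFe : F (D[m]'hm) = hex.choose := by
      simp only [hF]
      rw [dif_pos hex]
    have hspec := hex.choose_spec
    rw [← hFe] at hspec
    rw [hidx m hm] at hspec
    exact hspec
  have hFprops : ∀ s ∈ Bad, F s ∈ A ∧ F s ∉ S := by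
    intro s hs
    obtain ⟨hsD, hsA, hsg⟩ := (hmemBad s).1 hs
    obtain ⟨m, hm, rfl⟩ := List.getElem_of_mem hsD
    exact ⟨(hFspec m hm hsA hsg).1, (hFspec m hm hsA hsg).2.1⟩
  -- injectivity on Bad
  have hsubBadD : Bad.Sublist D := (List.filter_sublist).trans (List.filter_sublist)
  obtain ⟨eB, heB⟩ := List.sublist_iff_exists_fin_orderEmbedding_get_eq.1 hsubBadD
  have hpw : Bad.Pairwise (fun s t => F s ≠ F t) := by
    rw [List.pairwise_iff_getElem]
    intro j k hj hk hjk heq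
    have hj' := heB ⟨j, hj⟩
    have hk' := heB ⟨k, hk⟩
    simp only [List.get_eq_getElem] at hj' hk'
    have hjm : Bad[j] ∈ Bad := List.getElem_mem hj
    have hkm : Bad[k] ∈ Bad := List.getElem_mem hk
    obtain ⟨hjD, hjA, hjg⟩ := (hmemBad _).1 hjm
    obtain ⟨hkD, hkA, hkg⟩ := (hmemBad _).1 hkm
    have hjA' : (D[(eB ⟨j, hj⟩).1]'(eB ⟨j, hj⟩).2) ∉ A := hj' ▸ hjA
    have hjg' : ¬ good (D[(eB ⟨j, hj⟩).1]'(eB ⟨j, hj⟩).2) := hj' ▸ hjg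
    have hkA' : (D[(eB ⟨k, hk⟩).1]'(eB ⟨k, hk⟩).2) ∉ A := hk' ▸ hkA
    have hkg' : ¬ good (D[(eB ⟨k, hk⟩).1]'(eB ⟨k, hk⟩).2) := hk' ▸ hkg
    have hjs := hFspec _ (eB ⟨j, hj⟩).2 hjA' hjg'
    have hks := hFspec _ (eB ⟨k, hk⟩).2 hkA' hkg'
    have hlt : (eB ⟨j, hj⟩).1 < (eB ⟨k, hk⟩).1 := eB.strictMono (by exact hjk)
    have hmem : (D[(eB ⟨j, hj⟩).1]'(eB ⟨j, hj⟩).2) ∈ S.take (ii + 1 + (eB ⟨k, hk⟩).1) :=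
      mem_take_iff'.2 ⟨ii + 1 + (eB ⟨j, hj⟩).1, by omega, by omega, (hDget _ _).symm⟩
    have := hks.2.2.2 _ hmem
    rw [← hj', ← hk'] at *
    rw [← heq] at this
    exact this (hj' ▸ hjs.2.2.1)
  -- counting
  set M := Bad.map F with hM
  have hndM : M.Nodup := by
    rw [hM, List.Nodup, List.pairwise_map]
    exact hpw
  set DA := D.filter (fun s => decide (s ∈ A)) with hDA
  have hndDA : DA.Nodup := hndD.filter _
  have hcardle : 1 + DA.length + Bad.length ≤ Atf.card := by
    have hsub : insert x (DA.toFinset ∪ M.toFinset) ⊆ Atf := by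
      intro a ha
      rw [hmemAtf]
      rcases Finset.mem_insert.1 ha with h | h
      · exact h ▸ hxA
      rcases Finset.mem_union.1 h with h | h
      · have := List.mem_toFinset.1 h
        rw [hDA, List.mem_filter] at this
        simpa using this.2
      · obtain ⟨s, hs, rfl⟩ := List.mem_map.1 (List.mem_toFinset.1 h)
        exact (hFprops s hs).1
    have hxU : x ∉ DA.toFinset ∪ M.toFinset := by
      rw [Finset.mem_union]
      rintro (h | h)
      · exact hxD (List.mem_of_mem_filter (List.mem_toFinset.1 h))
      · obtain ⟨s, hs, he⟩ := List.mem_map.1 (List.mem_toFinset.1 h)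
        exact (hFprops s hs).2 (he ▸ hxS)
    have hdisj : Disjoint DA.toFinset M.toFinset := by
      rw [Finset.disjoint_left]
      intro a ha hb
      obtain ⟨s, hs, he⟩ := List.mem_map.1 (List.mem_toFinset.1 hb)
      have haS : a ∈ S := by
        rw [hSplit]
        exact List.mem_append_right _ (List.mem_cons_of_mem _
          (List.mem_of_mem_filter (List.mem_toFinset.1 ha)))
      exact (hFprops s hs).2 (he ▸ haS)
    calc 1 + DA.length + Bad.length
        = (insert x (DA.toFinset ∪ M.toFinset)).card := by
          rw [Finset.card_insert_of_notMem hxU, Finset.card_union_of_disjoint hdisj,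
            List.toFinset_card_of_nodup hndDA, List.toFinset_card_of_nodup hndM,
            hM, List.length_map]
          omega
      _ ≤ Atf.card := Finset.card_le_card hsub
  -- the new sequence
  set S2 := P ++ (L ++ T) with hS2
  have hS2len : S2.length = ii + (L.length + T.length) := by
    rw [hS2, List.length_append, List.length_append, hPlen]
  have hlenge : S.length ≤ S2.length := by
    rw [hS2len, hLlen]
    omega
  -- nodup of S2
  have hndT : T.Nodup := (hndD.filter _).filter _
  have hPA : ∀ t ∈ P, t ∉ A := by
    intro t ht
    rw [hP, mem_take_iff'] at ht
    obtain ⟨j, hjS, hji, rfl⟩ := ht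
    exact hfirst' j hji
  have hTD : ∀ t ∈ T, t ∈ D ∧ t ∉ A := fun t ht =>
    ⟨((hmemT t).1 ht).1, ((hmemT t).1 ht).2.1⟩
  have hndS2 : S2.Nodup := by
    rw [hS2, List.nodup_append, List.nodup_append]
    refine ⟨hndP, ⟨hndL, hndT, fun a haL b hbT hab => (hTD b hbT).2 ((hmemL b).1 (hab ▸ haL))⟩,
      fun a haP b hb hab => ?_⟩
    rcases List.mem_append.1 hb with h | h
    · exact hPA a haP ((hmemL a).1 (hab ▸ h))
    · exact hdisPxD a haP b (List.mem_cons_of_mem _ (hTD b h).1) hab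
  -- take decomposition
  have htake : ∀ k, S2.take k =
      P.take k ++ (L.take (k - ii) ++ T.take (k - ii - L.length)) := by
    intro k
    rw [hS2, List.take_append, List.take_append, hPlen]
  have hPtake : ∀ k, k ≤ ii → P.take k = S.take k := by
    intro k hkii
    rw [hP, List.take_take]
    congr 1
    omega
  -- sublist embedding for T in D
  have hsubTD : T.Sublist D := (List.filter_sublist).trans (List.filter_sublist)
  obtain ⟨eT, heT⟩ := List.sublist_iff_exists_fin_orderEmbedding_get_eq.1 hsubTD
  -- legality of S2
  have hlegS2 : ∀ k (hk : k < S2.length),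
      ∃ u, u ∈ CN G (S2[k]'hk) ∧ ∀ t ∈ S2.take k, u ∉ CN G t := by
    intro k hk
    have hk' : k < ii + (L.length + T.length) := hS2len ▸ hk
    by_cases hk1 : k < ii
    · -- prefix
      have hgetk : S2[k]'hk = S[k]'(lt_trans hk1 hiS) := by
        show (P ++ (L ++ T))[k]'(hS2 ▸ hk) = _
        rw [getElem_append3_left P L T (by rw [hPlen]; omega : k < P.length)]
        exact List.getElem_take
      obtain ⟨u, hu1, hu2⟩ := hleg k (lt_trans hk1 hiS)
      refine ⟨u, by rw [hgetk]; exact hu1, fun t ht => ?_⟩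
      rw [htake k] at ht
      have hz1 : k - ii = 0 := by omega
      have hz2 : k - ii - L.length = 0 := by omega
      simp only [hz1, Nat.zero_sub, List.take_zero, List.append_nil, List.mem_append,
        List.not_mem_nil, or_false] at ht
      rw [hPtake k (le_of_lt hk1)] at ht
      exact hu2 t ht
    · by_cases hk2 : k < ii + L.length
      · -- twin block
        have hbL : k - ii < L.length := by omega
        have hgetk : S2[k]'hk = L[k - ii]'hbL := by
          show (P ++ (L ++ T))[k]'(hS2 ▸ hk) = _
          rw [getElem_append3_mid P L T (by rw [hPlen]; omega : P.length ≤ k)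
            (by rw [hPlen]; omega)]
          simp only [hPlen]
        have haA : L[k - ii]'hbL ∈ A := (hmemL _).1 (List.getElem_mem hbL)
        refine ⟨L[k - ii]'hbL, by rw [hgetk]; exact mem_CN_self G _, fun t ht => ?_⟩
        rw [htake k] at ht
        have hz2 : k - ii - L.length = 0 := by omega
        rw [hz2] at ht
        simp only [List.take_zero, List.append_nil, List.mem_append] at ht
        rcases ht with ht | ht
        · have ht' : t ∈ P := List.take_subset k P ht
          rw [hP, mem_take_iff'] at ht'
          obtain ⟨j, hjS, hji, rfl⟩ := ht'
          exact hApre _ haA j hji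
        · rw [mem_take_iff'] at ht
          obtain ⟨j, hjL, hjk, rfl⟩ := ht
          refine hAA _ haA _ ((hmemL _).1 (List.getElem_mem hjL)) ?_
          intro he
          rw [hndL.getElem_inj_iff] at he
          omega
      · -- tail
        have hbT : k - ii - L.length < T.length := by omega
        have hgetk : S2[k]'hk = T[k - ii - L.length]'hbT := by
          show (P ++ (L ++ T))[k]'(hS2 ▸ hk) = _
          rw [getElem_append3_right P L T (by rw [hPlen]; omega : P.length + L.length ≤ k)
            (hS2 ▸ hk) (by rw [hPlen]; omega)]
          simp only [hPlen]
        set m := k - ii - L.length with hm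
        have hsT : T[m]'hbT ∈ T := List.getElem_mem hbT
        obtain ⟨hsD, hsA, hsg⟩ := (hmemT _).1 hsT
        have hTget : T[m]'hbT = D[(eT ⟨m, hbT⟩).1]'(eT ⟨m, hbT⟩).2 := by
          have := heT ⟨m, hbT⟩
          simpa using this
        obtain ⟨u, hu1, huA, hu2⟩ := hsg
        rw [hTget, hidx _ (eT ⟨m, hbT⟩).2] at hu2
        refine ⟨u, by rw [hgetk]; exact hu1, fun t ht => ?_⟩
        rw [htake k] at ht
        simp only [List.mem_append] at ht
        rcases ht with ht | ht | ht
        · have ht' : t ∈ P := List.take_subset k P ht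
          rw [hP, mem_take_iff'] at ht'
          obtain ⟨j, hjS, hji, rfl⟩ := ht'
          exact hu2 _ (mem_take_iff'.2 ⟨j, hjS, by omega, rfl⟩)
        · have htA : t ∈ A := (hmemL t).1 (List.take_subset _ _ ht)
          intro hmem
          rcases (hCNA t htA u).1 hmem with h | h
          · exact huA (h ▸ htA)
          · exact hu2 x (mem_take_iff'.2 ⟨ii, hiS, by omega, rfl⟩)
              (mem_CN_iff.2 (Or.inr h))
        · rw [mem_take_iff'] at ht
          obtain ⟨j, hjT, hjm, rfl⟩ := ht
          have hTgetj : T[j]'hjT = D[(eT ⟨j, hjT⟩).1]'(eT ⟨j, hjT⟩).2 := by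
            have := heT ⟨j, hjT⟩
            simpa using this
          have hlt : (eT ⟨j, hjT⟩).1 < (eT ⟨m, hbT⟩).1 := eT.strictMono (by exact hjm)
          rw [hTgetj]
          exact hu2 _ (mem_take_iff'.2 ⟨ii + 1 + (eT ⟨j, hjT⟩).1, by omega, by omega,
            (hDget _ _).symm⟩)
  -- domination
  have hPsub : ∀ t ∈ P, t ∈ S2 := fun t ht => hS2 ▸ List.mem_append_left _ ht
  have hLsub : ∀ t ∈ L, t ∈ S2 := fun t ht =>
    hS2 ▸ List.mem_append_right _ (List.mem_append_left _ ht)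
  have hTsub : ∀ t ∈ T, t ∈ S2 := fun t ht =>
    hS2 ▸ List.mem_append_right _ (List.mem_append_right _ ht)
  have hdom2 : ∀ v : V, ∃ u ∈ S2, v ∈ CN G u := by
    intro v
    have hex : ∃ m, ∃ h : m < S.length, v ∈ CN G (S[m]'h) := by
      obtain ⟨u, huS, hv⟩ := hdom v
      obtain ⟨m, hm, rfl⟩ := List.getElem_of_mem huS
      exact ⟨m, hm, hv⟩
    obtain ⟨hm, hvm⟩ := Nat.find_spec hex
    set m := Nat.find hex with hmdef
    have hmin : ∀ t ∈ S.take m, v ∉ CN G t := by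
      intro t ht hvt
      rw [mem_take_iff'] at ht
      obtain ⟨j, hjS, hjm, rfl⟩ := ht
      exact Nat.find_min hex hjm ⟨hjS, hvt⟩
    rcases lt_trichotomy m ii with h | h | h
    · exact ⟨S[m]'hm, hPsub _ (by rw [hP]; exact mem_take_iff'.2 ⟨m, hm, h, rfl⟩), hvm⟩
    · refine ⟨x, hLsub x ((hmemL x).2 hxA), ?_⟩
      have : S[m]'hm = x := by
        subst h
        rfl
      exact this ▸ hvm
    · have hmD : m - (ii + 1) < D.length := by omega
      have hsm : D[m - (ii + 1)]'hmD = S[m]'hm := by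
        rw [hDget _ hmD]
        congr 1
        omega
      by_cases hsA : S[m]'hm ∈ A
      · exact ⟨S[m]'hm, hLsub _ ((hmemL _).2 hsA), hvm⟩
      by_cases hsg : good (S[m]'hm)
      · exact ⟨S[m]'hm, hTsub _ ((hmemT _).2 ⟨hsm ▸ List.getElem_mem hmD, hsA, hsg⟩), hvm⟩
      · have hvA : v ∈ A := by
          by_contra hvA
          apply hsg
          refine ⟨v, hvm, hvA, ?_⟩
          have hie : S.idxOf (S[m]'hm) = m := List.Nodup.idxOf_getElem hnd m hm
          rw [hie]
          exact hmin
        exact ⟨v, hLsub v ((hmemL v).2 hvA), mem_CN_self G v⟩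
  -- packaging
  have hDS2 : IsDomSeq G S2 := ⟨(isCNSeq_iff' G S2).2 ⟨hndS2, hlegS2⟩, hdom2⟩
  have hbdd : BddAbove {n | ∃ S0 : List V, IsDomSeq G S0 ∧ S0.length = n} := by
    refine ⟨Fintype.card V, fun n hn => ?_⟩
    obtain ⟨S0, h0, hl⟩ := hn
    exact hl ▸ h0.1.1.length_le_card
  have hle : S2.length ≤ grundyDom G := le_csSup hbdd ⟨S2, hDS2, rfl⟩
  have hlen2 : S2.length = grundyDom G := le_antisymm hle (hlen ▸ hlenge)
  refine ⟨S2, hDS2, hlen2, fun a ha => hLsub a ((hmemL a).2 ha), ?_⟩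
  -- consecutiveness
  have hTA : ∀ t ∈ T, t ∉ A := fun t ht => (hTD t ht).2
  have key : ∀ (k : ℕ) (hk : k < S2.length), S2[k]'hk ∈ A →
      ii ≤ k ∧ k < ii + L.length := by
    intro k hk hkA
    have hk' : k < ii + (L.length + T.length) := hS2len ▸ hk
    constructor
    · by_contra h
      push_neg at h
      have hgetk : S2[k]'hk = S[k]'(lt_trans h hiS) := by
        show (P ++ (L ++ T))[k]'(hS2 ▸ hk) = _
        rw [getElem_append3_left P L T (by rw [hPlen]; omega : k < P.length)]
        exact List.getElem_take
      exact hfirst' k h (hgetk ▸ hkA)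
    · by_contra h
      push_neg at h
      have hbT : k - ii - L.length < T.length := by omega
      have hgetk : S2[k]'hk = T[k - ii - L.length]'hbT := by
        show (P ++ (L ++ T))[k]'(hS2 ▸ hk) = _
        rw [getElem_append3_right P L T (by rw [hPlen]; omega : P.length + L.length ≤ k)
          (hS2 ▸ hk) (by rw [hPlen]; omega)]
        simp only [hPlen]
      exact hTA _ (List.getElem_mem hbT) (hgetk ▸ hkA)
  intro p q r hpq hqr hp hr
  have hp' := key p.1 p.2 hp
  have hr' := key r.1 r.2 hr
  have hq1 : ii ≤ q.1 := le_trans hp'.1 hpq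
  have hq2 : q.1 < ii + L.length := lt_of_le_of_lt hqr hr'.2
  have hbL : q.1 - ii < L.length := by omega
  have hgetq : S2.get q = L[q.1 - ii]'hbL := by
    show (P ++ (L ++ T))[q.1]'(hS2 ▸ q.2) = _
    rw [getElem_append3_mid P L T (by rw [hPlen]; omega : P.length ≤ q.1)
      (by rw [hPlen]; omega)]
    simp only [hPlen]
  rw [hgetq]
  exact (hmemL _).1 (List.getElem_mem hbL)
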